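/- Let α < β with αβ ≠ 0, let γ ≠ 0 satisfy αγ > −1 and βγ > −1, and let ε ∈ (0,1). Then C_{α,β,γ}(ε) > 1. -/

import Mathlib

open Set

lemma softplus_deriv (c L : ℝ) :
    deriv (fun x : ℝ => Real.log (1 + Real.exp (c * x + L))) =
      fun x : ℝ => Real.exp (c * x + L) * c / (1 + Real.exp (c * x + L)) := by
  funext x
  have hlin : HasDerivAt (fun x : ℝ => c * x + L) c x := by
    simpa using ((hasDerivAt_id x).const_mul c).add_const L
  have hg : HasDerivAt (fun x : ℝ => 1 + Real.exp (c * x + L)) (Real.exp (c * x + L) * c) x :=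
    hlin.exp.const_add 1
  have hpos : (0:ℝ) < 1 + Real.exp (c * x + L) := by positivity
  exact (hg.log hpos.ne').deriv

lemma softplus_strictConvex (c L : ℝ) (hc : c ≠ 0) :
    StrictConvexOn ℝ Set.univ (fun x : ℝ => Real.log (1 + Real.exp (c * x + L))) := by
  apply strictConvexOn_of_deriv2_pos' convex_univ
  · apply ContinuousOn.log
    · fun_prop
    · intro x _
      positivity
  · intro x _
    have h2 : deriv^[2] (fun x : ℝ => Real.log (1 + Real.exp (c * x + L))) x
        = deriv (fun x : ℝ => Real.exp (c * x + L) * c / (1 + Real.exp (c * x + L))) x := by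
      simp [Function.iterate_succ, softplus_deriv]
    rw [h2]
    have hlin : HasDerivAt (fun x : ℝ => c * x + L) c x := by
      simpa using ((hasDerivAt_id x).const_mul c).add_const L
    have hE : HasDerivAt (fun x : ℝ => Real.exp (c * x + L)) (Real.exp (c * x + L) * c) x :=
      hlin.exp
    have hnum : HasDerivAt (fun x : ℝ => Real.exp (c * x + L) * c)
        (Real.exp (c * x + L) * c * c) x := hE.mul_const c
    have hden : HasDerivAt (fun x : ℝ => 1 + Real.exp (c * x + L))
        (Real.exp (c * x + L) * c) x := hE.const_add 1
    have hpos : (0:ℝ) < 1 + Real.exp (c * x + L) := by positivity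
    have hq := (hnum.div hden hpos.ne').deriv
    simp only [Pi.div_def] at hq
    rw [hq]
    set E := Real.exp (c * x + L) with hEdef
    have hEpos : 0 < E := Real.exp_pos _
    have : (E * c * c * (1 + E) - E * c * (E * c)) / (1 + E) ^ 2
        = c ^ 2 * E / (1 + E) ^ 2 := by ring
    rw [this]
    positivity

/-- The function `C_{α,β,γ}(ε)` from the paper:
`C_{α,β,γ}(ε) = (ε^{γβ+1}+1)^{1/β} (1+ε)^{1/α} / ((ε^{γα+1}+1)^{1/α} (1+ε)^{1/β})`. -/
noncomputable def Cfun (α β γ ε : ℝ) : ℝ :=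
  ((ε ^ (γ * β + 1) + 1) ^ (1 / β) * (1 + ε) ^ (1 / α)) /
    ((ε ^ (γ * α + 1) + 1) ^ (1 / α) * (1 + ε) ^ (1 / β))

/-- For `α < β` with `αβ ≠ 0`, `γ ≠ 0` with `αγ > -1`, `βγ > -1`, and `ε ∈ (0,1)`,
one has `C_{α,β,γ}(ε) > 1`. -/
theorem Cfun_gt_one
    (α β γ ε : ℝ) (hαβ : α < β) (h0 : α * β ≠ 0) (hγ : γ ≠ 0)
    (hγα : α * γ > -1) (hγβ : β * γ > -1) (hε₀ : 0 < ε) (hε₁ : ε < 1) :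
    1 < Cfun α β γ ε := by
  have hα0 : α ≠ 0 := left_ne_zero_of_mul h0
  have hβ0 : β ≠ 0 := right_ne_zero_of_mul h0
  set c : ℝ := γ * Real.log ε with hcdef
  set L : ℝ := Real.log ε with hLdef
  have hLneg : Real.log ε < 0 := Real.log_neg hε₀ hε₁
  have hc : c ≠ 0 := mul_ne_zero hγ hLneg.ne
  -- rewrite the rpow's as exponentials
  have hrw : ∀ t : ℝ, ε ^ (γ * t + 1) = Real.exp (c * t + L) := by
    intro t
    rw [Real.rpow_def_of_pos hε₀]
    congr 1
    simp only [hcdef, hLdef]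
    ring
  have hψ0 : Real.log (1 + Real.exp (c * 0 + L)) = Real.log (1 + ε) := by
    simp [hLdef, Real.exp_log hε₀]
  -- the secant inequality from strict convexity
  have hsec := (softplus_strictConvex c L hc).secant_strict_mono
    (Set.mem_univ 0) (Set.mem_univ α) (Set.mem_univ β) hα0 hβ0 hαβ
  simp only [sub_zero, hψ0] at hsec
  -- positivity facts
  have hA : (0:ℝ) < ε ^ (γ * β + 1) + 1 := by positivity
  have hD : (0:ℝ) < ε ^ (γ * α + 1) + 1 := by positivity
  have hB : (0:ℝ) < 1 + ε := by linarith
  have hC : 0 < Cfun α β γ ε := by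
    unfold Cfun
    positivity
  rw [← Real.log_pos_iff hC.le]
  unfold Cfun
  rw [Real.log_div (by positivity) (by positivity),
    Real.log_mul (by positivity) (by positivity),
    Real.log_mul (by positivity) (by positivity),
    Real.log_rpow hA, Real.log_rpow hB, Real.log_rpow hD, Real.log_rpow hB]
  have hAψ : Real.log (ε ^ (γ * β + 1) + 1) = Real.log (1 + Real.exp (c * β + L)) := by
    rw [hrw β, add_comm]
  have hDψ : Real.log (ε ^ (γ * α + 1) + 1) = Real.log (1 + Real.exp (c * α + L)) := by
    rw [hrw α, add_comm]
  rw [hAψ, hDψ]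
  have hring : 1 / β * Real.log (1 + Real.exp (c * β + L)) + 1 / α * Real.log (1 + ε)
      - (1 / α * Real.log (1 + Real.exp (c * α + L)) + 1 / β * Real.log (1 + ε))
      = (Real.log (1 + Real.exp (c * β + L)) - Real.log (1 + ε)) / β
        - (Real.log (1 + Real.exp (c * α + L)) - Real.log (1 + ε)) / α := by
    ring
  rw [hring]
  linarith
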